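/- Let r1, r2 ≥ 1, c₋, c be positive integers, K[t1, t2] ∈ ℝ^{c×c₋} for 0 ≤ t1 ≤ r1, 0 ≤ t2 ≤ r2, and b ∈ ℝ^c. Define the Roesser realization matrices: A12 ∈ ℝ^{c r1 × c₋ r2} and B1 ∈ ℝ^{c r1 × c₋} with block rows indexed by t1 = r1, r1−1, …, 1 and block columns of A12 indexed by t2 = r2, r2−1, …, 1, where the (t1, t2) block of A12 is K[t1, t2] and the t1-th block of B1 is K[t1, 0]; C2 ∈ ℝ^{c × c₋ r2} with blocks K[0, r2], …, K[0, 1] and D = K[0, 0]; A11 ∈ ℝ^{c r1 × c r1} the block down-shift matrix [[0, 0], [I_{c(r1−1)}, 0]] and C1 = [0, I_c] ∈ ℝ^{c × c r1}; A21 = 0; and [A22, B2] = [[0, I_{c₋(r2−1)}, 0], [0, 0, I_{c₋}]], i.e., A22 ∈ ℝ^{c₋ r2 × c₋ r2} is the block up-shift matrix and B2 ∈ ℝ^{c₋ r2 × c₋} has its last block equal to I_{c₋} and all other blocks zero. For any input u : ℕ × ℕ → ℝ^{c₋}, extend it by ũ[i, j] = u[i, j] for i, j ≥ 0 and ũ[i,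 j] = 0 otherwise, and suppose x1 : ℕ × ℕ → ℝ^{c r1}, x2 : ℕ × ℕ → ℝ^{c₋ r2}, y : ℕ × ℕ → ℝ^c satisfy the Roesser recursion x1[i+1, j] = A11 x1[i, j] + A12 x2[i, j] + B1 u[i, j], x2[i, j+1] = A22 x2[i, j] + B2 u[i, j], y[i, j] = C1 x1[i, j] + C2 x2[i, j] + D u[i, j] + b, with boundary conditions x1[0, j] = 0 for all j and x2[i, 0] = 0 for all i. Then for all i, j ∈ ℕ, y[i, j] = b + Σ_{t1=0}^{r1} Σ_{t2=0}^{r2} K[t1, t2] ũ[i − t1, j − t2], i.e., the Roesser model realizes the 2-D convolution with kernel K, bias b, stride 1, and zero padding. -/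

import Mathlib

open Matrix Finset

lemma sum_fin_ite {M : Type*} [AddCommMonoid M] {n : ℕ} (f : Fin n → M) (k : ℕ) :
    (∑ q : Fin n, if (q : ℕ) = k then f q else 0) =
      if h : k < n then f ⟨k, h⟩ else 0 := by
  by_cases h : k < n
  · rw [dif_pos h, Finset.sum_eq_single (⟨k, h⟩ : Fin n)]
    · rw [if_pos rfl]
    · intro q _ hq; rw [if_neg]; intro hk; exact hq (Fin.ext hk)
    · intro h'; exact absurd (Finset.mem_univ _) h'
  · rw [dif_neg h]; apply Finset.sum_eq_zero; intro q _; rw [if_neg]; omega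

lemma sum_fin_succ_ite {M : Type*} [AddCommMonoid M] {n : ℕ} (f : Fin n → M) (k : ℕ) :
    (∑ q : Fin n, if k = (q : ℕ) + 1 then f q else 0) =
      if h : k - 1 < n ∧ 0 < k then f ⟨k - 1, h.1⟩ else 0 := by
  by_cases h : k - 1 < n ∧ 0 < k
  · rw [dif_pos h, Finset.sum_eq_single (⟨k - 1, h.1⟩ : Fin n)]
    · rw [if_pos (show k = k - 1 + 1 by omega)]
    · intro q _ hq; rw [if_neg]; intro hk
      exact hq (Fin.ext (show (q : ℕ) = k - 1 by omega))
    · intro h'; exact absurd (Finset.mem_univ _) h'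
  · rw [dif_neg h]; apply Finset.sum_eq_zero; intro q _; rw [if_neg]; omega

lemma sum_Icc_one {M : Type*} [AddCommMonoid M] (n : ℕ) (f : ℕ → M) :
    ∑ t ∈ Finset.Icc 1 n, f t = ∑ t ∈ Finset.range n, f (t + 1) := by
  rw [show Finset.Icc 1 n = Finset.Ico 1 (n + 1) by rfl, Finset.sum_Ico_eq_sum_range]
  simp [add_comm]

/-- The Roesser 2-D state-space model built from the kernel `K`
(as in Lemma 1 of the paper) realizes the 2-D convolution
`y[i,j] = b + Σ_{t1=0}^{r1} Σ_{t2=0}^{r2} K[t1,t2] ũ[i−t1, j−t2]` with zero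
padding. Horizontal state blocks are indexed by `Fin r1 × Fin c`, vertical
state blocks by `Fin r2 × Fin c₋`. -/
theorem conv2d_roesser_realization
    (r1 r2 cm c : ℕ) (hr1 : 1 ≤ r1) (hr2 : 1 ≤ r2) (hcm : 0 < cm) (hc : 0 < c)
    (K : ℕ → ℕ → Matrix (Fin c) (Fin cm) ℝ) (b : Fin c → ℝ)
    (A11 : Matrix (Fin r1 × Fin c) (Fin r1 × Fin c) ℝ)
    (hA11 : A11 = Matrix.of fun p q =>
      if (p.1 : ℕ) = (q.1 : ℕ) + 1 ∧ p.2 = q.2 then (1 : ℝ) else 0)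
    (A12 : Matrix (Fin r1 × Fin c) (Fin r2 × Fin cm) ℝ)
    (hA12 : A12 = Matrix.of fun p q => K (r1 - (p.1 : ℕ)) (r2 - (q.1 : ℕ)) p.2 q.2)
    (B1 : Matrix (Fin r1 × Fin c) (Fin cm) ℝ)
    (hB1 : B1 = Matrix.of fun p j => K (r1 - (p.1 : ℕ)) 0 p.2 j)
    (C1 : Matrix (Fin c) (Fin r1 × Fin c) ℝ)
    (hC1 : C1 = Matrix.of fun a p =>
      if (p.1 : ℕ) = r1 - 1 ∧ a = p.2 then (1 : ℝ) else 0)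
    (A22 : Matrix (Fin r2 × Fin cm) (Fin r2 × Fin cm) ℝ)
    (hA22 : A22 = Matrix.of fun p q =>
      if (q.1 : ℕ) = (p.1 : ℕ) + 1 ∧ p.2 = q.2 then (1 : ℝ) else 0)
    (B2 : Matrix (Fin r2 × Fin cm) (Fin cm) ℝ)
    (hB2 : B2 = Matrix.of fun p j =>
      if (p.1 : ℕ) = r2 - 1 ∧ p.2 = j then (1 : ℝ) else 0)
    (C2 : Matrix (Fin c) (Fin r2 × Fin cm) ℝ)
    (hC2 : C2 = Matrix.of fun a p => K 0 (r2 - (p.1 : ℕ)) a p.2)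
    (D : Matrix (Fin c) (Fin cm) ℝ) (hD : D = K 0 0)
    (u : ℕ → ℕ → Fin cm → ℝ)
    (ut : ℤ → ℤ → Fin cm → ℝ)
    (hut : ∀ i j : ℤ, ut i j = if 0 ≤ i ∧ 0 ≤ j then u i.toNat j.toNat else 0)
    (x1 : ℕ → ℕ → Fin r1 × Fin c → ℝ)
    (x2 : ℕ → ℕ → Fin r2 × Fin cm → ℝ)
    (y : ℕ → ℕ → Fin c → ℝ)
    (hx10 : ∀ j, x1 0 j = 0) (hx20 : ∀ i, x2 i 0 = 0)
    (hx1 : ∀ i j, x1 (i + 1) j = A11 *ᵥ x1 i j + A12 *ᵥ x2 i j + B1 *ᵥ u i j)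
    (hx2 : ∀ i j, x2 i (j + 1) = A22 *ᵥ x2 i j + B2 *ᵥ u i j)
    (hy : ∀ i j, y i j = C1 *ᵥ x1 i j + C2 *ᵥ x2 i j + D *ᵥ u i j + b) :
    ∀ i j : ℕ, y i j = b + ∑ t1 ∈ Finset.range (r1 + 1), ∑ t2 ∈ Finset.range (r2 + 1),
      K t1 t2 *ᵥ ut ((i : ℤ) - (t1 : ℤ)) ((j : ℤ) - (t2 : ℤ)) := by
  subst hA11 hA12 hB1 hC1 hA22 hB2 hC2 hD
  -- closed form for the vertical state x2
  have hx2c : ∀ i j (t : Fin r2) (a : Fin cm),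
      x2 i j (t, a) = ut i ((j : ℤ) - ((r2 - (t : ℕ) : ℕ) : ℤ)) a := by
    intro i j
    induction j with
    | zero =>
      intro t a
      rw [hx20, hut, if_neg]
      · rfl
      · rintro ⟨-, h2⟩
        have := t.2
        omega
    | succ j ih =>
      intro t a
      rw [hx2]
      have h1 : ((Matrix.of fun p q : Fin r2 × Fin cm =>
          if (q.1 : ℕ) = (p.1 : ℕ) + 1 ∧ p.2 = q.2 then (1 : ℝ) else 0) *ᵥ x2 i j) (t, a)
          = ∑ q1 : Fin r2, if ((q1 : ℕ)) = (t : ℕ) + 1 then x2 i j (q1, a) else 0 := by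
        simp only [Matrix.mulVec, dotProduct, Matrix.of_apply, Fintype.sum_prod_type,
          ite_mul, one_mul, zero_mul, ite_and]
        congr 1; funext q1
        split
        · rw [Finset.sum_ite_eq]; simp
        · simp
      have h2 : ((Matrix.of fun (p : Fin r2 × Fin cm) j =>
          if (p.1 : ℕ) = r2 - 1 ∧ p.2 = j then (1 : ℝ) else 0) *ᵥ u i j) (t, a)
          = if (t : ℕ) = r2 - 1 then u i j a else 0 := by
        simp only [Matrix.mulVec, dotProduct, Matrix.of_apply, ite_mul, one_mul,
          zero_mul, ite_and]
        split
        · rw [Finset.sum_ite_eq]; simp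
        · simp
      rw [Pi.add_apply, h1, h2, sum_fin_ite]
      by_cases ht : (t : ℕ) + 1 < r2
      · rw [dif_pos ht, if_neg (by omega), add_zero, ih ⟨(t : ℕ) + 1, ht⟩ a]
        have hv : (((⟨(t : ℕ) + 1, ht⟩ : Fin r2) : ℕ)) = (t : ℕ) + 1 := rfl
        rw [show ((j : ℤ) - ((r2 - ((⟨(t : ℕ) + 1, ht⟩ : Fin r2) : ℕ) : ℕ) : ℤ)) =
          (((j + 1 : ℕ) : ℤ) - ((r2 - (t : ℕ) : ℕ) : ℤ)) by rw [hv]; omega]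
      · have ht' : (t : ℕ) = r2 - 1 := by have := t.2; omega
        rw [dif_neg (by omega), if_pos ht', zero_add, hut, if_pos]
        · congr 2 <;> omega
        · exact ⟨by positivity, by omega⟩
  -- closed form for the horizontal state x1
  have hx1c : ∀ i j (s : Fin r1) (a : Fin c),
      x1 i j (s, a) = ∑ t1 ∈ Finset.Icc (r1 - (s : ℕ)) r1, ∑ t2 ∈ Finset.range (r2 + 1),
        (K t1 t2 *ᵥ ut ((i : ℤ) - 1 - (t1 : ℤ) + ((r1 - (s : ℕ) : ℕ) : ℤ))
          ((j : ℤ) - (t2 : ℤ))) a := by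
    intro i
    induction i with
    | zero =>
      intro j s a
      rw [hx10]
      symm
      apply Finset.sum_eq_zero
      intro t1 ht1
      apply Finset.sum_eq_zero
      intro t2 _
      have ht1' := Finset.mem_Icc.mp ht1
      have hz : ut (((0 : ℕ) : ℤ) - 1 - (t1 : ℤ) + ((r1 - (s : ℕ) : ℕ) : ℤ))
          ((j : ℤ) - (t2 : ℤ)) = 0 := by
        rw [hut, if_neg]
        rintro ⟨h1, -⟩
        omega
      rw [hz, Matrix.mulVec_zero]
      rfl
    | succ i ih =>
      intro j s a
      rw [hx1]
      set m := r1 - (s : ℕ) with hm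
      have hs2 := s.2
      have hm1 : 1 ≤ m := by omega
      have hmr : m ≤ r1 := by omega
      have h1 : ((Matrix.of fun p q : Fin r1 × Fin c =>
          if (p.1 : ℕ) = (q.1 : ℕ) + 1 ∧ p.2 = q.2 then (1 : ℝ) else 0) *ᵥ x1 i j) (s, a)
          = ∑ q1 : Fin r1, if (s : ℕ) = (q1 : ℕ) + 1 then x1 i j (q1, a) else 0 := by
        simp only [Matrix.mulVec, dotProduct, Matrix.of_apply, Fintype.sum_prod_type,
          ite_mul, one_mul, zero_mul, ite_and]
        congr 1; funext q1
        split
        · rw [Finset.sum_ite_eq]; simp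
        · simp
      have h2 : ((Matrix.of fun (p : Fin r1 × Fin c) (q : Fin r2 × Fin cm) =>
          K (r1 - (p.1 : ℕ)) (r2 - (q.1 : ℕ)) p.2 q.2) *ᵥ x2 i j) (s, a)
          = ∑ q1 : Fin r2,
              (K m (r2 - (q1 : ℕ)) *ᵥ ut i ((j : ℤ) - ((r2 - (q1 : ℕ) : ℕ) : ℤ))) a := by
        simp only [Matrix.mulVec, dotProduct, Matrix.of_apply, Fintype.sum_prod_type]
        refine Finset.sum_congr rfl fun q1 _ => Finset.sum_congr rfl fun q2 _ => ?_
        rw [hx2c]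
      have huu : ut (i : ℤ) (j : ℤ) = u i j := by
        rw [hut, if_pos ⟨Int.natCast_nonneg i, Int.natCast_nonneg j⟩]
        simp
      have h3 : ((Matrix.of fun (p : Fin r1 × Fin c) j => K (r1 - (p.1 : ℕ)) 0 p.2 j)
          *ᵥ u i j) (s, a) = (K m 0 *ᵥ ut (i : ℤ) (j : ℤ)) a := by
        rw [huu]
        simp only [Matrix.mulVec, dotProduct, Matrix.of_apply]
        rfl
      rw [Pi.add_apply, Pi.add_apply, h1, h2, h3, sum_fin_succ_ite]
      have hins : Finset.Icc m r1 = insert m (Finset.Icc (m + 1) r1) := by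
        ext x; simp only [Finset.mem_Icc, Finset.mem_insert]; omega
      rw [hins, Finset.sum_insert (by simp)]
      have harg0 : (((i + 1 : ℕ) : ℤ) - 1 - (m : ℤ) + (m : ℤ)) = (i : ℤ) := by push_cast; ring
      rw [harg0]
      rw [Finset.sum_range_succ']
      have hfin : (∑ q1 : Fin r2,
            (K m (r2 - (q1 : ℕ)) *ᵥ ut i ((j : ℤ) - ((r2 - (q1 : ℕ) : ℕ) : ℤ))) a)
          = ∑ t2 ∈ Finset.range r2,
            (K m (t2 + 1) *ᵥ ut i ((j : ℤ) - ((t2 + 1 : ℕ) : ℤ))) a := by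
        rw [Fin.sum_univ_eq_sum_range
          (fun q => (K m (r2 - q) *ᵥ ut i ((j : ℤ) - ((r2 - q : ℕ) : ℤ))) a) r2,
          ← Finset.sum_range_reflect]
        refine Finset.sum_congr rfl fun q hq => ?_
        have hq' := Finset.mem_range.mp hq
        rw [show r2 - (r2 - 1 - q) = q + 1 by omega]
      have hzero : ((j : ℤ) - ((0 : ℕ) : ℤ)) = (j : ℤ) := by push_cast; ring
      by_cases hs : 0 < (s : ℕ)
      · rw [dif_pos ⟨by omega, hs⟩, ih j ⟨(s : ℕ) - 1, by omega⟩ a]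
        have hv : (((⟨(s : ℕ) - 1, by omega⟩ : Fin r1) : ℕ)) = (s : ℕ) - 1 := rfl
        rw [hfin]
        have hIcc : r1 - ((⟨(s : ℕ) - 1, by omega⟩ : Fin r1) : ℕ) = m + 1 := by
          rw [hv]; omega
        rw [hIcc]
        have hsum : ∀ t1 ∈ Finset.Icc (m + 1) r1, ∀ t2 ∈ Finset.range (r2 + 1),
            (K t1 t2 *ᵥ ut ((i : ℤ) - 1 - (t1 : ℤ) + ((m + 1 : ℕ) : ℤ))
              ((j : ℤ) - (t2 : ℤ))) a
            = (K t1 t2 *ᵥ ut (((i + 1 : ℕ) : ℤ) - 1 - (t1 : ℤ) + ((m : ℕ) : ℤ))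
              ((j : ℤ) - (t2 : ℤ))) a := by
          intro t1 _ t2 _
          rw [show ((i : ℤ) - 1 - (t1 : ℤ) + ((m + 1 : ℕ) : ℤ))
            = (((i + 1 : ℕ) : ℤ) - 1 - (t1 : ℤ) + ((m : ℕ) : ℤ)) by push_cast; ring]
        rw [Finset.sum_congr rfl fun t1 ht1 =>
          Finset.sum_congr rfl fun t2 ht2 => hsum t1 ht1 t2 ht2]
        rw [hzero]
        ring
      · have hm' : m = r1 := by omega
        rw [dif_neg (by omega)]
        have hempty : Finset.Icc (m + 1) r1 = ∅ :=
          Finset.Icc_eq_empty (by omega)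
        rw [hempty, Finset.sum_empty, hfin, hzero]
        ring
  -- final output computation
  intro i j
  rw [hy]
  funext a
  have huu : ut (i : ℤ) (j : ℤ) = u i j := by
    rw [hut, if_pos ⟨Int.natCast_nonneg i, Int.natCast_nonneg j⟩]
    simp
  have hC1 : ((Matrix.of fun a (p : Fin r1 × Fin c) =>
      if (p.1 : ℕ) = r1 - 1 ∧ a = p.2 then (1 : ℝ) else 0) *ᵥ x1 i j) a
      = x1 i j (⟨r1 - 1, by omega⟩, a) := by
    simp only [Matrix.mulVec, dotProduct, Matrix.of_apply, Fintype.sum_prod_type,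
      ite_mul, one_mul, zero_mul, ite_and]
    have : ∀ q1 : Fin r1, (∑ q2 : Fin c, if (q1 : ℕ) = r1 - 1 then
        if a = q2 then x1 i j (q1, q2) else 0 else 0)
        = if (q1 : ℕ) = r1 - 1 then x1 i j (q1, a) else 0 := by
      intro q1
      split
      · rw [Finset.sum_ite_eq]; simp
      · simp
    rw [Finset.sum_congr rfl fun q1 _ => this q1, sum_fin_ite, dif_pos (by omega)]
  have hC2 : ((Matrix.of fun a (p : Fin r2 × Fin cm) =>
      K 0 (r2 - (p.1 : ℕ)) a p.2) *ᵥ x2 i j) a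
      = ∑ t2 ∈ Finset.range r2,
          (K 0 (t2 + 1) *ᵥ ut i ((j : ℤ) - ((t2 + 1 : ℕ) : ℤ))) a := by
    have : ((Matrix.of fun a (p : Fin r2 × Fin cm) =>
        K 0 (r2 - (p.1 : ℕ)) a p.2) *ᵥ x2 i j) a
        = ∑ q1 : Fin r2,
            (K 0 (r2 - (q1 : ℕ)) *ᵥ ut i ((j : ℤ) - ((r2 - (q1 : ℕ) : ℕ) : ℤ))) a := by
      simp only [Matrix.mulVec, dotProduct, Matrix.of_apply, Fintype.sum_prod_type]
      refine Finset.sum_congr rfl fun q1 _ => Finset.sum_congr rfl fun q2 _ => ?_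
      rw [hx2c]
    rw [this, Fin.sum_univ_eq_sum_range
        (fun q => (K 0 (r2 - q) *ᵥ ut i ((j : ℤ) - ((r2 - q : ℕ) : ℤ))) a) r2,
      ← Finset.sum_range_reflect]
    refine Finset.sum_congr rfl fun q hq => ?_
    have hq' := Finset.mem_range.mp hq
    rw [show r2 - (r2 - 1 - q) = q + 1 by omega]
  have hD : (K 0 0 *ᵥ u i j) a = (K 0 0 *ᵥ ut (i : ℤ) (j : ℤ)) a := by rw [huu]
  rw [Pi.add_apply, Pi.add_apply, Pi.add_apply, hC1, hC2, hD,
    hx1c i j ⟨r1 - 1, by omega⟩ a]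
  have hm : r1 - ((⟨r1 - 1, by omega⟩ : Fin r1) : ℕ) = 1 := by
    have : ((⟨r1 - 1, by omega⟩ : Fin r1) : ℕ) = r1 - 1 := rfl
    rw [this]; omega
  rw [hm]
  rw [Finset.sum_congr rfl fun t1 (_ : t1 ∈ Finset.Icc 1 r1) =>
    Finset.sum_congr rfl fun t2 _ => by
      rw [show ((i : ℤ) - 1 - (t1 : ℤ) + ((1 : ℕ) : ℤ)) = ((i : ℤ) - (t1 : ℤ)) by
        push_cast; ring]]
  -- rewrite RHS
  rw [Pi.add_apply]
  simp only [Finset.sum_apply]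
  rw [Finset.sum_range_succ']
  rw [show ((i : ℤ) - ((0 : ℕ) : ℤ)) = (i : ℤ) by push_cast; ring]
  rw [Finset.sum_range_succ' (fun t2 => (K 0 t2 *ᵥ ut (i : ℤ) ((j : ℤ) - (t2 : ℤ))) a) r2]
  rw [show ((j : ℤ) - ((0 : ℕ) : ℤ)) = (j : ℤ) by push_cast; ring]
  rw [sum_Icc_one r1 (fun t1 => ∑ t2 ∈ Finset.range (r2 + 1),
    (K t1 t2 *ᵥ ut ((i : ℤ) - (t1 : ℤ)) ((j : ℤ) - (t2 : ℤ))) a)]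
  ring
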